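/- Let T be a caterpillar with a backbone B = (b₁,...,b_k), and suppose each stray P is assigned a color C(P) ∈ {1,...,12b²−1} such that strays whose associated directional intervals intersect receive distinct colors. Define α by α(b_i) = 48b³(n+i) for backbone vertices, and for a stray P = (p₁,...,p_m) ordered by increasing distance to B and attached at u ∈ B: α(p_i) = α(u) + C(P) − i·12b² if P is oriented west, and α(p_i) = α(u) + C(P) + (i−1)·12b² otherwise. Then α is injective and has bandwidth at most 48b³; hence its compression is a layout of T of bandwidth at most 48b³. -/

import Mathlib

theorem compress_aux {V : Type} [Fintype V] (A : V → ℤ) (hA : Function.Injective A) :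
    ∃ γ : V ≃ Fin (Fintype.card V), ∀ u v : V, |(γ u : ℤ) - (γ v : ℤ)| ≤ |A u - A v| := by
  letI : LinearOrder V := LinearOrder.lift' A hA
  have hle : ∀ x y : V, x ≤ y ↔ A x ≤ A y := fun _ _ => Iff.rfl
  have hlt : ∀ x y : V, x < y ↔ A x < A y := by
    intro x y
    rw [lt_iff_le_not_ge, lt_iff_le_not_ge, hle, hle]
  let e : Fin (Fintype.card V) ≃o V := monoEquivOfFin V rfl
  refine ⟨e.toEquiv.symm, ?_⟩
  have key : ∀ u v : V, A u < A v →
      ((e.toEquiv.symm v : ℤ) - (e.toEquiv.symm u : ℤ)) ≤ A v - A u := by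
    intro u v huv
    set S : Finset V := Finset.univ.filter (fun w => A u ≤ A w ∧ A w < A v) with hSdef
    have hmem : ∀ w : V, w ∈ S ↔ A u ≤ A w ∧ A w < A v := by
      intro w; simp [hSdef]
    have hsymm_le : ∀ x y : V, e.symm x ≤ e.symm y ↔ x ≤ y := fun x y => e.symm.le_iff_le
    have hsymm_lt : ∀ x y : V, e.symm x < e.symm y ↔ x < y := fun x y => e.symm.lt_iff_lt
    have h1 : S.card = (Finset.Ico (e.symm u) (e.symm v)).card := by
      apply Finset.card_bij (fun w _ => e.symm w)
      · intro w hw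
        rw [Finset.mem_Ico, hsymm_le, hsymm_lt, hle, hlt]
        exact (hmem w).1 hw
      · intro x hx y hy hxy
        exact e.symm.injective hxy
      · intro k hk
        refine ⟨e k, ?_, by simp⟩
        rw [Finset.mem_Ico] at hk
        rw [hmem, ← hle, ← hlt, ← hsymm_le, ← hsymm_lt]
        simpa using hk
    have h2 : S.card ≤ (A v - A u).toNat := by
      rw [← Int.card_Ico]
      apply Finset.card_le_card_of_injOn A
      · intro w hw
        rw [Finset.mem_coe, Finset.mem_Ico]
        exact (hmem w).1 hw
      · exact fun x _ y _ h => hA h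
    have huv' : e.symm u < e.symm v := by rw [hsymm_lt, hlt]; exact huv
    have h3 : ((e.symm v : ℕ) : ℤ) - ((e.symm u : ℕ) : ℤ)
        = ((Finset.Ico (e.symm u) (e.symm v)).card : ℤ) := by
      rw [Fin.card_Ico]
      have : (e.symm u : ℕ) ≤ (e.symm v : ℕ) := le_of_lt huv'
      omega
    calc ((e.toEquiv.symm v : ℤ) - (e.toEquiv.symm u : ℤ))
        = ((Finset.Ico (e.symm u) (e.symm v)).card : ℤ) := h3
      _ = (S.card : ℤ) := by rw [h1]
      _ ≤ ((A v - A u).toNat : ℤ) := by exact_mod_cast h2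
      _ = A v - A u := Int.toNat_of_nonneg (by omega)
  have hsle : ∀ u v : V, A u < A v → (e.toEquiv.symm u : ℤ) ≤ (e.toEquiv.symm v : ℤ) := by
    intro u v h
    have h1 : e.symm u < e.symm v := e.symm.lt_iff_lt.mpr ((hlt u v).mpr h)
    have h2 : (e.symm u : ℕ) < (e.symm v : ℕ) := h1
    exact_mod_cast le_of_lt h2
  intro u v
  rcases lt_trichotomy (A u) (A v) with h | h | h
  · have h1 := key u v h
    have h2 := hsle u v h
    rw [abs_sub_comm, abs_of_nonneg (by omega), abs_sub_comm, abs_of_nonneg (by omega)]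
    exact h1
  · have : u = v := hA h
    subst this; simp
  · have h1 := key v u h
    have h2 := hsle v u h
    rw [abs_of_nonneg (by omega), abs_of_nonneg (by omega)]
    exact h1

/-- `layoutBandwidthLE G α b` means the layout `α` of `G` has bandwidth at most `b`. -/
def layoutBandwidthLE {V : Type} [Fintype V] (G : SimpleGraph V)
    (α : V ≃ Fin (Fintype.card V)) (b : ℕ) : Prop :=
  ∀ u v : V, G.Adj u v → |(α u : ℤ) - (α v : ℤ)| ≤ (b : ℤ)

/-- The layout produced by the caterpillar algorithm has bandwidth at most `48·b³`.
The caterpillar `T` has backbone `bb 1, ..., bb kb` and strays indexed by `Fin N`: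
stray `i` has vertices `pv i 1, ..., pv i (m i)` (ordered by increasing distance to
the backbone) and is attached at `bb (pos i)`; its directional interval is
`[l i, l i + 12 b² (m i)]`.  Given a coloring `Cc` of the strays with colors in
`{1, ..., 12b² - 1}` such that strays with intersecting directional intervals get
distinct colors, the sparse ordering `A` defined by `A (bb i) = 48 b³ (n + i)` and
`A (pv i j) = A (bb (pos i)) + Cc i - j·12b²` (west) resp.
`A (pv i j) = A (bb (pos i)) + Cc i + (j-1)·12b²` (east) is injective and has
bandwidth at most `48 b³`; hence its compression is a layout of bandwidth `≤ 48 b³`. -/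
theorem catAlg_layout_bandwidth {V : Type} [Fintype V] (T : SimpleGraph V)
    (b : ℕ) (hb : 1 ≤ b)
    (kb N : ℕ) (bb : ℕ → V) (m : Fin N → ℕ) (hmpos : ∀ i, 1 ≤ m i)
    (pos : Fin N → ℕ) (hpos : ∀ i, 1 ≤ pos i ∧ pos i ≤ kb)
    (pv : Fin N → ℕ → V) (dir : Fin N → Bool)
    (hcover : ∀ v : V, (∃ i, 1 ≤ i ∧ i ≤ kb ∧ v = bb i) ∨
        ∃ i : Fin N, ∃ j, 1 ≤ j ∧ j ≤ m i ∧ v = pv i j)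
    (hadj : ∀ u w : V, T.Adj u w ↔
      ((∃ i, 1 ≤ i ∧ i + 1 ≤ kb ∧
          ((u = bb i ∧ w = bb (i + 1)) ∨ (w = bb i ∧ u = bb (i + 1)))) ∨
       (∃ i : Fin N, ∃ j, 1 ≤ j ∧ j + 1 ≤ m i ∧
          ((u = pv i j ∧ w = pv i (j + 1)) ∨ (w = pv i j ∧ u = pv i (j + 1)))) ∨
       (∃ i : Fin N, (u = bb (pos i) ∧ w = pv i 1) ∨ (w = bb (pos i) ∧ u = pv i 1))))
    (l : Fin N → ℤ)
    (hl : ∀ i, l i = if dir i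
        then (pos i : ℤ) * (48 * (b : ℤ) ^ 3) - 12 * (b : ℤ) ^ 2 * (m i : ℤ)
        else (pos i : ℤ) * (48 * (b : ℤ) ^ 3))
    (Cc : Fin N → ℕ) (hCc : ∀ i, 1 ≤ Cc i ∧ Cc i ≤ 12 * b ^ 2 - 1)
    (hcolor : ∀ i j : Fin N, i ≠ j →
        l i ≤ l j + 12 * (b : ℤ) ^ 2 * (m j : ℤ) →
        l j ≤ l i + 12 * (b : ℤ) ^ 2 * (m i : ℤ) → Cc i ≠ Cc j)
    (A : V → ℤ)
    (hAbb : ∀ i, 1 ≤ i → i ≤ kb →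
        A (bb i) = 48 * (b : ℤ) ^ 3 * ((Fintype.card V : ℤ) + i))
    (hApv : ∀ (i : Fin N) (j : ℕ), 1 ≤ j → j ≤ m i →
        A (pv i j) = A (bb (pos i)) + (Cc i : ℤ) +
          (if dir i then -((j : ℤ) * (12 * (b : ℤ) ^ 2))
           else ((j : ℤ) - 1) * (12 * (b : ℤ) ^ 2))) :
    Function.Injective A ∧
    (∀ u w : V, T.Adj u w → |A u - A w| ≤ 48 * (b : ℤ) ^ 3) ∧
    ∃ γ : V ≃ Fin (Fintype.card V), layoutBandwidthLE T γ (48 * b ^ 3) := by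
  set M : ℤ := 12 * (b : ℤ) ^ 2 with hMdef
  set K : ℤ := 48 * (b : ℤ) ^ 3 with hKdef
  set n : ℤ := (Fintype.card V : ℤ) with hndef
  have hbZ : (1 : ℤ) ≤ (b : ℤ) := by exact_mod_cast hb
  have hM : 0 < M := by positivity
  have hK : 0 < K := by positivity
  have hMK : M ≤ K := by
    rw [hMdef, hKdef]; nlinarith
  have hKM : K = 4 * (b : ℤ) * M := by rw [hMdef, hKdef]; ring
  have hCcZ : ∀ i, 1 ≤ (Cc i : ℤ) ∧ (Cc i : ℤ) ≤ M - 1 := by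
    intro i
    have h1 := (hCc i).1
    have h2 := (hCc i).2
    have hb2 : 1 ≤ b ^ 2 := Nat.one_le_pow _ _ hb
    constructor
    · exact_mod_cast h1
    · have h3 : (Cc i : ℤ) ≤ ((12 * b ^ 2 - 1 : ℕ) : ℤ) := by exact_mod_cast h2
      have h12 : ((12 * b ^ 2 - 1 : ℕ) : ℤ) = M - 1 := by
        rw [hMdef]; push_cast [Nat.cast_sub (by omega : 1 ≤ 12 * b ^ 2)]; ring
      omega
  -- uniform value formula
  have Aval : ∀ (i : Fin N) (j : ℕ), 1 ≤ j → j ≤ m i →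
      A (pv i j) = K * n + l i + (Cc i : ℤ) +
        (if dir i then (m i : ℤ) - (j : ℤ) else (j : ℤ) - 1) * M := by
    intro i j hj1 hj2
    rw [hApv i j hj1 hj2, hAbb (pos i) (hpos i).1 (hpos i).2, hl i]
    cases hdi : dir i <;> simp only [if_true, if_false, Bool.false_eq_true] <;> ring
  have hdivpv : ∀ (i : Fin N) (j : ℕ), 1 ≤ j → j ≤ m i →
      ∃ q : ℤ, A (pv i j) = M * q + (Cc i : ℤ) := by
    intro i j hj1 hj2
    rw [Aval i j hj1 hj2, hl i]
    cases hdi : dir i <;> simp only [if_true, if_false, Bool.false_eq_true]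
    · exact ⟨4 * b * (pos i : ℤ) + 4 * b * n + ((j : ℤ) - 1), by rw [hKM]; ring⟩
    · exact ⟨4 * b * (pos i : ℤ) - (m i : ℤ) + 4 * b * n + ((m i : ℤ) - (j : ℤ)), by
        rw [hKM]; ring⟩
  have hmodpv : ∀ (i : Fin N) (j : ℕ), 1 ≤ j → j ≤ m i →
      A (pv i j) % M = (Cc i : ℤ) := by
    intro i j hj1 hj2
    obtain ⟨q, hq⟩ := hdivpv i j hj1 hj2
    rw [hq, add_comm, Int.add_mul_emod_self_left]
    exact Int.emod_eq_of_lt (by linarith [(hCcZ i).1]) (by linarith [(hCcZ i).2])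
  have hmodbb : ∀ i : ℕ, 1 ≤ i → i ≤ kb → A (bb i) % M = 0 := by
    intro i h1 h2
    rw [hAbb i h1 h2, hKM]
    have h3 : 4 * (b : ℤ) * M * (n + (i : ℤ)) = M * (4 * b * (n + i)) := by ring
    rw [h3, Int.mul_emod_right]
  have htb : ∀ (i : Fin N) (j : ℕ), 1 ≤ j → j ≤ m i →
      0 ≤ (if dir i then (m i : ℤ) - (j : ℤ) else (j : ℤ) - 1) ∧
      (if dir i then (m i : ℤ) - (j : ℤ) else (j : ℤ) - 1) ≤ (m i : ℤ) - 1 := by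
    intro i j hj1 hj2
    cases dir i <;> simp <;> omega
  have hinj : Function.Injective A := by
    intro u w h
    rcases hcover u with ⟨i, hi1, hi2, rfl⟩ | ⟨i, j, hj1, hj2, rfl⟩ <;>
      rcases hcover w with ⟨i', hi1', hi2', rfl⟩ | ⟨i', j', hj1', hj2', rfl⟩
    · rw [hAbb i hi1 hi2, hAbb i' hi1' hi2'] at h
      have hK0 : K ≠ 0 := ne_of_gt hK
      have h4 : n + (i : ℤ) = n + (i' : ℤ) := mul_left_cancel₀ hK0 h
      have h5 : i = i' := by omega
      rw [h5]
    · exfalso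
      have h1 := hmodbb i hi1 hi2
      have h2 := hmodpv i' j' hj1' hj2'
      rw [h] at h1
      rw [h1] at h2
      have := (hCcZ i').1
      omega
    · exfalso
      have h1 := hmodbb i' hi1' hi2'
      have h2 := hmodpv i j hj1 hj2
      rw [← h] at h1
      rw [h1] at h2
      have := (hCcZ i).1
      omega
    · have hcc : (Cc i : ℤ) = (Cc i' : ℤ) := by
        have h1 := hmodpv i j hj1 hj2
        have h2 := hmodpv i' j' hj1' hj2'
        rw [h] at h1; rw [h1] at h2; exact h2
      have hccN : Cc i = Cc i' := by exact_mod_cast hcc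
      have hv : K * n + l i + (Cc i : ℤ) +
            (if dir i then (m i : ℤ) - (j : ℤ) else (j : ℤ) - 1) * M
          = K * n + l i' + (Cc i' : ℤ) +
            (if dir i' then (m i' : ℤ) - (j' : ℤ) else (j' : ℤ) - 1) * M := by
        rw [← Aval i j hj1 hj2, ← Aval i' j' hj1' hj2', h]
      have hti := htb i j hj1 hj2
      have hti' := htb i' j' hj1' hj2'
      have hii : i = i' := by
        by_contra hne
        apply hcolor i i' hne _ _ hccN
        · have hbd1 : l i < l i + (Cc i : ℤ) +
              (if dir i then (m i : ℤ) - (j : ℤ) else (j : ℤ) - 1) * M := by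
            have := mul_nonneg hti.1 (le_of_lt hM)
            linarith [(hCcZ i).1]
          have hbd2 : l i' + (Cc i' : ℤ) +
              (if dir i' then (m i' : ℤ) - (j' : ℤ) else (j' : ℤ) - 1) * M
              ≤ l i' + M * (m i' : ℤ) := by
            have h1 : (if dir i' then (m i' : ℤ) - (j' : ℤ) else (j' : ℤ) - 1) * M
                ≤ ((m i' : ℤ) - 1) * M :=
              mul_le_mul_of_nonneg_right hti'.2 (le_of_lt hM)
            have h2 := (hCcZ i').2
            nlinarith
          linarith
        · have hbd1 : l i' < l i' + (Cc i' : ℤ) +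
              (if dir i' then (m i' : ℤ) - (j' : ℤ) else (j' : ℤ) - 1) * M := by
            have := mul_nonneg hti'.1 (le_of_lt hM)
            linarith [(hCcZ i').1]
          have hbd2 : l i + (Cc i : ℤ) +
              (if dir i then (m i : ℤ) - (j : ℤ) else (j : ℤ) - 1) * M
              ≤ l i + M * (m i : ℤ) := by
            have h1 : (if dir i then (m i : ℤ) - (j : ℤ) else (j : ℤ) - 1) * M
                ≤ ((m i : ℤ) - 1) * M :=
              mul_le_mul_of_nonneg_right hti.2 (le_of_lt hM)
            have h2 := (hCcZ i).2
            nlinarith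
          linarith
      subst hii
      have hM0 : M ≠ 0 := ne_of_gt hM
      have htt : (if dir i then (m i : ℤ) - (j : ℤ) else (j : ℤ) - 1)
          = (if dir i then (m i : ℤ) - (j' : ℤ) else (j' : ℤ) - 1) :=
        mul_right_cancel₀ hM0 (by linarith)
      have hjj : j = j' := by
        rcases Bool.eq_false_or_eq_true (dir i) with hdi | hdi <;>
          rw [hdi] at htt <;> simp at htt <;> omega
      rw [hjj]
  have hbw : ∀ u w : V, T.Adj u w → |A u - A w| ≤ K := by
    intro u w huw
    rw [hadj] at huw
    rcases huw with ⟨i, hi1, hi2, hc⟩ | ⟨i, j, hj1, hj2, hc⟩ | ⟨i, hc⟩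
    · have e1 := hAbb i hi1 (by omega)
      have e2 := hAbb (i + 1) (by omega) hi2
      have hval : A (bb i) - A (bb (i + 1)) = -K := by
        rw [e1, e2]; push_cast; ring
      rcases hc with ⟨rfl, rfl⟩ | ⟨rfl, rfl⟩
      · rw [hval, abs_neg, abs_of_pos hK]
      · rw [abs_sub_comm, hval, abs_neg, abs_of_pos hK]
    · have e1 := hApv i j hj1 (by omega)
      have e2 := hApv i (j + 1) (by omega) hj2
      have hval : |A (pv i j) - A (pv i (j + 1))| = M := by
        rcases Bool.eq_false_or_eq_true (dir i) with hdi | hdi <;>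
          rw [hdi] at e1 e2 <;> simp only [Bool.false_eq_true, if_false, if_true] at e1 e2
        · have hd : A (pv i j) - A (pv i (j + 1)) = M := by
            rw [e1, e2]; push_cast; ring
          rw [hd, abs_of_pos hM]
        · have hd : A (pv i j) - A (pv i (j + 1)) = -M := by
            rw [e1, e2]; push_cast; ring
          rw [hd, abs_neg, abs_of_pos hM]
      rcases hc with ⟨rfl, rfl⟩ | ⟨rfl, rfl⟩
      · rw [hval]; exact hMK
      · rw [abs_sub_comm, hval]; exact hMK
    · have e1 := hApv i 1 le_rfl (hmpos i)
      have hval : |A (bb (pos i)) - A (pv i 1)| ≤ M - 1 := by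
        have h1 := (hCcZ i).1
        have h2 := (hCcZ i).2
        rcases Bool.eq_false_or_eq_true (dir i) with hdi | hdi <;>
          rw [hdi] at e1 <;> simp only [Bool.false_eq_true, if_false, if_true] at e1
        · have hd : A (bb (pos i)) - A (pv i 1) = M - (Cc i : ℤ) := by
            rw [e1]; push_cast; ring
          rw [hd, abs_of_nonneg (by omega)]; omega
        · have hd : A (bb (pos i)) - A (pv i 1) = -(Cc i : ℤ) := by
            rw [e1]; push_cast; ring
          rw [hd, abs_neg, abs_of_nonneg (by omega)]; omega
      rcases hc with ⟨rfl, rfl⟩ | ⟨rfl, rfl⟩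
      · omega
      · rw [abs_sub_comm]; omega
  refine ⟨hinj, hbw, ?_⟩
  obtain ⟨γ, hγ⟩ := compress_aux A hinj
  refine ⟨γ, ?_⟩
  intro u v huv
  have h1 := hγ u v
  have h2 := hbw u v huv
  have h3 : ((48 * b ^ 3 : ℕ) : ℤ) = K := by rw [hKdef]; push_cast; ring
  rw [h3]
  omega
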